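/- For a contract (A, (G_I, G_T)), for all states s and numbers n, if Extend_n(s) and Viable_n(s) hold then Viable_{n+1}(s) holds. -/
import Mathlib


/-- Reachability with respect to assumptions: least predicate closed under
    initial states and assumption-respecting transitions. -/
inductive Reachable {state input : Type*} (I : state → Prop)
    (T : state → input → state → Prop) (A : state → input → Prop) : state → Prop
  | init (s : state) : I s → Reachable I T A s
  | step (s_prev : state) (i : input) (s : state) :
      Reachable I T A s_prev → A s_prev i → T s_prev i s → Reachable I T A s

/-- A transition system (I, T) is a realization of the contract (A, (GI, GT)). -/
def Realization {state input : Type*} (I : state → Prop)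
    (T : state → input → state → Prop) (A : state → input → Prop)
    (GI : state → Prop) (GT : state → input → state → Prop) : Prop :=
  (∀ s, I s → GI s) ∧
  (∀ s i s', Reachable I T A s ∧ A s i ∧ T s i s' → GT s i s') ∧
  (∃ s, I s) ∧
  (∀ s i, Reachable I T A s ∧ A s i → ∃ s', T s i s')

/-- A contract is realizable if some transition system realizes it. -/
def Realizable {state input : Type*} (A : state → input → Prop)
    (GI : state → Prop) (GT : state → input → state → Prop) : Prop :=
  ∃ I T, Realization I T A GI GT

/-- Viability: the greatest predicate V with
    V s ↔ ∀ i, A s i → ∃ s', GT s i s' ∧ V s'.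
    Characterized via Knaster–Tarski as the union of all post-fixed points. -/
def Viable {state input : Type*} (A : state → input → Prop)
    (GT : state → input → state → Prop) (s : state) : Prop :=
  ∃ V : state → Prop, V s ∧ (∀ x, V x → ∀ i, A x i → ∃ s', GT x i s' ∧ V s')

/-- Finite viability: GT can keep responding to valid inputs for n steps. -/
def ViableN {state input : Type*} (A : state → input → Prop)
    (GT : state → input → state → Prop) : ℕ → state → Prop
  | 0, _ => True
  | n + 1, s => ∀ i, A s i → ∃ s', GT s i s' ∧ ViableN A GT n s'

/-- One-step extendability after n steps. -/
def ExtendN {state input : Type*} (A : state → input → Prop)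
    (GT : state → input → state → Prop) : ℕ → state → Prop
  | 0, s => ∀ i, A s i → ∃ s', GT s i s'
  | n + 1, s => ∀ i s₁, A s i ∧ GT s i s₁ → ExtendN A GT n s₁

/-- BaseCheck(n): some initial-guarantee state is viable for n steps. -/
def BaseCheck {state input : Type*} (A : state → input → Prop)
    (GI : state → Prop) (GT : state → input → state → Prop) (n : ℕ) : Prop :=
  ∃ s, GI s ∧ ViableN A GT n s

/-- ExtendCheck(n): every state is extendable after n steps. -/
def ExtendCheck {state input : Type*} (A : state → input → Prop)
    (GT : state → input → state → Prop) (n : ℕ) : Prop :=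
  ∀ s, ExtendN A GT n s

/-- Simplified base check BaseCheck'(n). -/
def BaseCheck' {state input : Type*} (A : state → input → Prop)
    (GI : state → Prop) (GT : state → input → state → Prop) (n : ℕ) : Prop :=
  ∀ s, GI s → ExtendN A GT n s

/-- Extend_n(s) and Viable_n(s) imply Viable_{n+1}(s). -/
theorem extendN_viableN_succ {state input : Type*}
    (A : state → input → Prop) (GT : state → input → state → Prop) :
    ∀ (s : state) (n : ℕ), ExtendN A GT n s → ViableN A GT n s →
      ViableN A GT (n + 1) s := by
  intro s n
  induction n generalizing s with
  | zero =>
    intro h _ i hi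
    obtain ⟨s', hs'⟩ := h i hi
    exact ⟨s', hs', trivial⟩
  | succ n ih =>
    intro hE hV i hi
    obtain ⟨s', hGT, hV'⟩ := hV i hi
    exact ⟨s', hGT, ih s' (hE i s' ⟨hi, hGT⟩) hV'⟩
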